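/- arXiv:2012.06561 — 8 statements merged into one kernel-verified Lean document; each statement's English description precedes it below -/
import Mathlib

section
/- Soundness of Introspection of Comprehension: in any epistemic model with meanings, for any state w, meaning m ∈ M_w, agent a, and formula φ, if (w,m) ⊨ C_a φ then (w,m) ⊨ K_a C_a φ. -/
/-- An epistemic model with meanings. -/
structure EMM (Agent Var : Type) where
  W : Type
  rel : Agent → W → W → Prop
  equiv : ∀ a, Equivalence (rel a)
  M : W → Type
  nonempty : ∀ w, Nonempty (M w)
  val : (w : W) → Var → Set (M w)

/-- Formulas of the bimodal language. -/
inductive Form (Agent Var : Type) : Type where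
  | var : Var → Form Agent Var
  | neg : Form Agent Var → Form Agent Var
  | imp : Form Agent Var → Form Agent Var → Form Agent Var
  | K : Agent → Form Agent Var → Form Agent Var
  | C : Agent → Form Agent Var → Form Agent Var

variable {Agent Var : Type}

/-- Satisfaction relation. -/
def Sat (Mo : EMM Agent Var) : Form Agent Var → (w : Mo.W) → Mo.M w → Prop
  | .var p, w, m => m ∈ Mo.val w p
  | .neg φ, w, m => ¬ Sat Mo φ w m
  | .imp φ ψ, w, m => Sat Mo φ w m → Sat Mo ψ w m
  | .K a φ, w, _ => ∀ u, Mo.rel a w u → ∀ m' : Mo.M u, Sat Mo φ u m'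
  | .C a φ, w, _ => ∀ u, Mo.rel a w u → ∀ m' m'' : Mo.M u, Sat Mo φ u m' → Sat Mo φ u m''

theorem stmt5 (Mo : EMM Agent Var) (w : Mo.W) (m : Mo.M w) (a : Agent)
    (φ : Form Agent Var) (h : Sat Mo (.C a φ) w m) : Sat Mo (.K a (.C a φ)) w m := by
  intro u hwu _ v huv
  exact h v ((Mo.equiv a).trans hwu huv)
end

section
/- Soundness of Comprehension of Negation: in any epistemic model with meanings, for any state w, meaning m ∈ M_w, agent a, and formula φ, if (w,m) ⊨ C_a φ then (w,m) ⊨ C_a ¬φ. -/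
variable {Agent Var : Type}

theorem stmt6 (Mo : EMM Agent Var) (w : Mo.W) (m : Mo.M w) (a : Agent)
    (φ : Form Agent Var) (h : Sat Mo (.C a φ) w m) : Sat Mo (.C a (.neg φ)) w m := by
  intro u hu m' m'' hn hp
  exact hn (h u hu m'' m' hp)
end

section
/- Soundness of Comprehension of Implication: in any epistemic model with meanings, for any state w, meaning m ∈ M_w, agent a, and formulas φ, ψ: if (w,m) ⊨ C_a φ and (w,m) ⊨ C_a ψ, then (w,m) ⊨ C_a(φ → ψ). -/
variable {Agent Var : Type}

theorem stmt7 (Mo : EMM Agent Var) (w : Mo.W) (m : Mo.M w) (a : Agent)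
    (φ ψ : Form Agent Var) (h1 : Sat Mo (.C a φ) w m) (h2 : Sat Mo (.C a ψ) w m) :
    Sat Mo (.C a (.imp φ ψ)) w m := by
  intro u hu m' m'' himp hφ''
  exact h2 u hu m' m'' (himp (h1 u hu m'' m' hφ''))
end

section
/- Soundness of the Substitution axiom: in any epistemic model with meanings, for any state w, meaning m ∈ M_w, agent a, and formulas φ, ψ: if (w,m) ⊨ K_a(φ ↔ ψ) and (w,m) ⊨ C_a φ, then (w,m) ⊨ C_a ψ. -/
variable {Agent Var : Type}

/-- Conjunction defined through negation and implication. -/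
def Form.and (φ ψ : Form Agent Var) : Form Agent Var := .neg (.imp φ (.neg ψ))

/-- Biconditional defined as the conjunction of the two implications. -/
def Form.iff (φ ψ : Form Agent Var) : Form Agent Var := (Form.imp φ ψ).and (Form.imp ψ φ)

theorem stmt8 (Mo : EMM Agent Var) (w : Mo.W) (m : Mo.M w) (a : Agent)
    (φ ψ : Form Agent Var) (h1 : Sat Mo (.K a (φ.iff ψ)) w m)
    (h2 : Sat Mo (.C a φ) w m) : Sat Mo (.C a ψ) w m := by
  intro u hu m' m'' hs
  have hiff := h1 u hu
  have h1' := hiff m'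
  have h2' := hiff m''
  simp only [Form.iff, Form.and, Sat] at h1' h2'
  have hC := h2 u hu m' m''
  tauto
end

section
/- Soundness of the Comprehension of Comprehension axiom: in any epistemic model with meanings, for any state w, meaning m ∈ M_w, any agents a, b, and any formula φ: (w,m) ⊨ C_a C_b φ. In other words, C_a C_b φ is valid. -/
variable {Agent Var : Type}

theorem stmt9 (Mo : EMM Agent Var) (w : Mo.W) (m : Mo.M w) (a b : Agent)
    (φ : Form Agent Var) : Sat Mo (.C a (.C b φ)) w m := by
  intro u _ m1 m2 h
  simp only [Sat] at *
  exact h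
end

section
/- Soundness of the Incomprehensible axiom: in any epistemic model with meanings, for any state w, meaning m ∈ M_w, any agents a, b, and any formula φ: (w,m) ⊨ C_a(C_b φ → φ). That is, C_a(C_b φ → φ) is valid. -/
variable {Agent Var : Type}

theorem stmt10 (Mo : EMM Agent Var) (w : Mo.W) (m : Mo.M w) (a b : Agent)
    (φ : Form Agent Var) : Sat Mo (.C a (.imp (.C b φ) φ)) w m := by
  intro u _ m' m'' h hC
  exact Mo.equiv b |>.refl u |> fun hr => hC u hr m' m'' (h hC)
end

section
/- In the two-state, two-meaning 'left' and 'right' models (single agent a, single propositional variable p; both models have states {1,2} with 1 ∼_a 2, meanings {1,2} in both states; left valuation: π^l_1(p) = {1,2}, π^l_2(p) = ∅; right valuation: π^r_1(p) = {1}, π^r_2(p) = {2}), for every formula φ in the K-fragment (built from p, ¬, →, K_a only) and all x, y ∈ {1,2}: (x,y) ⊨_l φ if and only if (y,x) ⊨_r φ. -/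
variable {Agent Var : Type}

/-- Membership in the K-fragment: no occurrence of the C modality. -/
def noC : Form Agent Var → Prop
  | .var _ => True
  | .neg φ => noC φ
  | .imp φ ψ => noC φ ∧ noC ψ
  | .K _ φ => noC φ
  | .C _ _ => False

/-- The left model: states 0,1 (named 1,2 in the paper), both indistinguishable,
meanings 0,1 (named 1,2) in each state; p true under both meanings of state 0
and under no meaning of state 1. -/
def leftM : EMM Unit Unit where
  W := Fin 2
  rel := fun _ _ _ => True
  equiv := fun _ => ⟨fun _ => trivial, fun _ => trivial, fun _ _ => trivial⟩
  M := fun _ => Fin 2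
  nonempty := fun _ => ⟨0⟩
  val := fun w _ => {m : Fin 2 | w = 0}

/-- The right model: same states, relation and meanings; p true exactly under
meaning 0 (named 1) of each state (chosen so that y ∈ π^l_x(p) ↔ x ∈ π^r_y(p)). -/
def rightM : EMM Unit Unit where
  W := Fin 2
  rel := fun _ _ _ => True
  equiv := fun _ => ⟨fun _ => trivial, fun _ => trivial, fun _ _ => trivial⟩
  M := fun _ => Fin 2
  nonempty := fun _ => ⟨0⟩
  val := fun _ _ => {m : Fin 2 | m = 0}

theorem stmt12 (φ : Form Unit Unit) (hφ : noC φ) (x y : Fin 2) :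
    Sat leftM φ x y ↔ Sat rightM φ y x := by
  induction φ generalizing x y with
  | var p => simp [Sat, leftM, rightM]; exact Iff.rfl
  | neg φ ih => exact not_congr (ih hφ x y)
  | imp φ ψ ih1 ih2 => exact imp_congr (ih1 hφ.1 x y) (ih2 hφ.2 x y)
  | K a φ ih =>
      simp only [Sat]
      constructor
      · intro h u _ m'; exact (ih hφ m' u).mp (h m' trivial u)
      · intro h u _ m'; exact (ih hφ u m').mpr (h m' trivial u)
  | C a φ ih => exact absurd hφ id
end

section
/- The comprehension modality is not definable through knowledge: there exist two epistemic models with meanings and pointed states (state-meaning pairs) that satisfy exactly the same formulas of the K-fragment (built from propositional variables, ¬, →, K_a), yet one satisfies C_a p and the other does not. Consequently, no formula of the K-fragment is semantically equivalent to C_a p. -/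
variable {Agent Var : Type}

def MoL : EMM Unit Unit where
  W := Bool
  rel := fun _ _ _ => True
  equiv := fun _ => ⟨fun _ => trivial, fun _ => trivial, fun _ _ => trivial⟩
  M := fun _ => Bool
  nonempty := fun _ => ⟨true⟩
  val := fun w _ => {_m | w = true}

def MoR : EMM Unit Unit where
  W := Bool
  rel := fun _ _ _ => True
  equiv := fun _ => ⟨fun _ => trivial, fun _ => trivial, fun _ _ => trivial⟩
  M := fun _ => Bool
  nonempty := fun _ => ⟨true⟩
  val := fun _ _ => {m | m = true}

lemma swap_lemma : ∀ φ : Form Unit Unit, noC φ →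
    ∀ (w m : Bool), Sat MoL φ w m ↔ Sat MoR φ m w := by
  intro φ
  induction φ with
  | var p => intro _ w m; exact Iff.rfl
  | neg φ ih => intro h w m; simp only [Sat]; rw [ih h]
  | imp φ ψ ih1 ih2 => intro h w m; simp only [Sat]; rw [ih1 h.1, ih2 h.2]
  | K a φ ih =>
      intro h w m
      simp only [Sat]
      constructor
      · intro H u _ m'; exact (ih h m' u).mp (H m' trivial u)
      · intro H u _ m'; exact (ih h u m').mpr (H m' trivial u)
  | C a φ ih => intro h; exact absurd h not_false

theorem stmt13 :
    (∃ (Mo Mo' : EMM Unit Unit) (w : Mo.W) (m : Mo.M w) (w' : Mo'.W) (m' : Mo'.M w'),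
      (∀ φ : Form Unit Unit, noC φ → (Sat Mo φ w m ↔ Sat Mo' φ w' m')) ∧
      Sat Mo (.C () (.var ())) w m ∧ ¬ Sat Mo' (.C () (.var ())) w' m') ∧
    (∀ ψ : Form Unit Unit, noC ψ →
      ¬ ∀ (Mo : EMM Unit Unit) (w : Mo.W) (m : Mo.M w),
          (Sat Mo ψ w m ↔ Sat Mo (.C () (.var ())) w m)) := by
  constructor
  · refine ⟨MoL, MoR, true, true, true, true, ?_, ?_, ?_⟩
    · intro φ h; exact swap_lemma φ h true true
    · intro u _ m' m'' h; exact h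
    · intro H
      have := H true trivial true false
      simp [Sat, MoR] at this
      exact Bool.false_ne_true (this rfl)
  · intro ψ hψ H
    have h1 : Sat MoL (.C () (.var ())) true true := by
      intro u _ m' m''; simp [Sat, MoL]
      exact id
    have h2 : Sat MoL ψ true true := (H MoL true true).mpr h1
    have h3 : Sat MoR ψ true true := (swap_lemma ψ hψ true true).mp h2
    have h4 : Sat MoR (.C () (.var ())) true true := (H MoR true true).mp h3
    have := h4 true trivial true false
    simp [Sat, MoR] at this
    exact Bool.false_ne_true (this rfl)
end
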